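/- For every integer k ≥ 1, the domination number of the hypercube of dimension 2^k satisfies γ(Q_{2^k}) = 2^{2^k − k}. -/

import Mathlib

open SimpleGraph

/-- The complete graph on two vertices. -/
abbrev K2 : SimpleGraph (Fin 2) := ⊤

/-- `S` is a dominating set of `G`: every vertex not in `S` is adjacent to a vertex of `S`. -/
def IsDominatingSet {V : Type*} (G : SimpleGraph V) (S : Finset V) : Prop :=
  ∀ v : V, v ∉ S → ∃ u ∈ S, G.Adj v u

/-- `S` is a total dominating set of `G`: every vertex is adjacent to a vertex of `S`. -/
def IsTotalDominatingSet {V : Type*} (G : SimpleGraph V) (S : Finset V) : Prop :=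
  ∀ v : V, ∃ u ∈ S, G.Adj v u

/-- The domination number of `G`. -/
noncomputable def dominationNumber {V : Type*} (G : SimpleGraph V) : ℕ :=
  sInf {n : ℕ | ∃ S : Finset V, IsDominatingSet G S ∧ S.card = n}

/-- The total domination number of `G`. -/
noncomputable def totalDominationNumber {V : Type*} (G : SimpleGraph V) : ℕ :=
  sInf {n : ℕ | ∃ S : Finset V, IsTotalDominatingSet G S ∧ S.card = n}

/-- The `n`-dimensional hypercube: vertices are binary strings of length `n`,
two vertices are adjacent iff they differ in exactly one coordinate. -/
def hypercube (n : ℕ) : SimpleGraph (Fin n → Bool) where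
  Adj x y := hammingDist x y = 1
  symm := ⟨fun x y h => by simpa [hammingDist_comm] using h⟩
  loopless := ⟨fun x h => by simp [hammingDist_self] at h⟩

open Finset

namespace VanWee

variable {N : ℕ}

def ball (x : Fin N → Bool) : Finset (Fin N → Bool) :=
  Finset.univ.filter fun y => hammingDist x y ≤ 1

lemma mem_ball {x y : Fin N → Bool} : y ∈ ball x ↔ hammingDist x y ≤ 1 := by
  simp [ball]

lemma hammingDist_flip (x : Fin N → Bool) (i : Fin N) :
    hammingDist x (Function.update x i (!(x i))) = 1 := by
  have h : (Finset.univ.filter fun j => x j ≠ Function.update x i (!(x i)) j) = {i} := by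
    ext j
    by_cases hj : j = i
    · subst hj; simp
    · simp [Function.update_of_ne hj, hj]
  unfold hammingDist
  rw [h, Finset.card_singleton]

lemma exists_flip {x y : Fin N → Bool} (h : hammingDist x y = 1) :
    ∃ i, y = Function.update x i (!(x i)) := by
  unfold hammingDist at h
  obtain ⟨i, hi⟩ := Finset.card_eq_one.mp h
  refine ⟨i, funext fun j => ?_⟩
  by_cases hj : j = i
  · subst hj
    have hmem : j ∈ Finset.univ.filter fun j' => x j' ≠ y j' := by
      rw [hi]; exact Finset.mem_singleton_self j
    have hne : x j ≠ y j := by simpa using hmem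
    rw [Function.update_self]
    cases hx : x j <;> cases hy : y j <;> simp_all
  · have hnot : j ∉ Finset.univ.filter fun j' => x j' ≠ y j' := by
      rw [hi]; simp [hj]
    have : ¬ x j ≠ y j := by simpa using hnot
    rw [Function.update_of_ne hj]
    exact (not_not.mp this).symm

lemma ball_eq (x : Fin N → Bool) :
    ball x = insert x ((Finset.univ : Finset (Fin N)).image fun i => Function.update x i (!(x i))) := by
  ext y
  simp only [mem_ball, Finset.mem_insert, Finset.mem_image, Finset.mem_univ, true_and]
  constructor
  · intro h
    rcases Nat.le_one_iff_eq_zero_or_eq_one.mp h with h0 | h1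
    · left; exact (hammingDist_eq_zero.mp h0).symm
    · right; obtain ⟨i, hi⟩ := exists_flip h1; exact ⟨i, hi.symm⟩
  · rintro (rfl | ⟨i, rfl⟩)
    · simp [hammingDist_self]
    · rw [hammingDist_flip]

lemma card_ball (x : Fin N → Bool) : (ball x).card = N + 1 := by
  rw [ball_eq]
  have hinj : Function.Injective (fun i => Function.update x i (!(x i))) := by
    intro i j hij
    by_contra hne
    have h1 := congrFun hij i
    simp only [] at h1
    rw [Function.update_self, Function.update_of_ne hne] at h1
    cases hx : x i <;> simp [hx] at h1
  rw [Finset.card_insert_of_notMem, Finset.card_image_of_injective _ hinj, Finset.card_univ,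
    Fintype.card_fin]
  intro hmem
  obtain ⟨i, _, hi⟩ := Finset.mem_image.mp hmem
  have := congrFun hi i
  rw [Function.update_self] at this
  cases hx : x i <;> simp [hx] at this

lemma even_inter (x c : Fin N → Bool) (hxc : x ≠ c) :
    Even ((ball x).filter fun y => hammingDist y c ≤ 1).card := by
  classical
  set s : Finset (Fin N → Bool) := (ball x).filter (fun y => hammingDist y c ≤ 1) with hs
  let φ : (Fin N → Bool) → (Fin N → Bool) := fun y j => xor (x j) (xor (c j) (y j))
  have hdist1 : ∀ y : Fin N → Bool, hammingDist x (φ y) = hammingDist y c := by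
    intro y
    unfold hammingDist
    congr 1
    ext j
    simp only [Finset.mem_filter, Finset.mem_univ, true_and, φ]
    cases x j <;> cases c j <;> cases y j <;> simp
  have hdist2 : ∀ y : Fin N → Bool, hammingDist x y = hammingDist (φ y) c := by
    intro y
    unfold hammingDist
    congr 1
    ext j
    simp only [Finset.mem_filter, Finset.mem_univ, true_and, φ]
    cases x j <;> cases c j <;> cases y j <;> simp
  have hmem : ∀ y ∈ s, φ y ∈ s := by
    intro y hy
    rw [hs, Finset.mem_filter, mem_ball] at hy ⊢
    exact ⟨by rw [hdist1]; exact hy.2, by rw [← hdist2]; exact hy.1⟩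
  have hinv : ∀ y, φ (φ y) = y := by
    intro y
    funext j
    simp only [φ]
    cases x j <;> cases c j <;> cases y j <;> simp
  have hne : ∀ y, φ y ≠ y := by
    intro y hEq
    apply hxc
    funext j
    have hj := congrFun hEq j
    simp only [φ] at hj
    cases hx : x j <;> cases hc : c j <;> cases hy : y j <;> simp_all
  have hsum : ∑ _y ∈ s, (1 : ZMod 2) = 0 := by
    refine Finset.sum_involution (fun y _ => φ y) (fun a _ => by decide)
      (fun a _ _ => hne a) (fun a ha => hmem a ha) (fun a ha => hinv a)
  have hcast : ((s.card : ℕ) : ZMod 2) = 0 := by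
    rw [← hsum, Finset.sum_const, nsmul_eq_mul, mul_one]
  have hdvd : (2 : ℕ) ∣ s.card := by
    rwa [ZMod.natCast_eq_zero_iff] at hcast
  obtain ⟨m, hm⟩ := hdvd
  exact ⟨m, by omega⟩

lemma swap_sum (P : (Fin N → Bool) → Prop) [DecidablePred P] (f : (Fin N → Bool) → ℕ) :
    ∑ x ∈ Finset.univ.filter P, ∑ y ∈ ball x, f y
      = ∑ y : Fin N → Bool, f y * ((ball y).filter P).card := by
  classical
  calc ∑ x ∈ Finset.univ.filter P, ∑ y ∈ ball x, f y
      = ∑ x ∈ Finset.univ.filter P, ∑ y : Fin N → Bool,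
          if hammingDist x y ≤ 1 then f y else 0 := by
        refine Finset.sum_congr rfl fun x _ => ?_
        rw [ball, Finset.sum_filter]
    _ = ∑ y : Fin N → Bool, ∑ x ∈ Finset.univ.filter P,
          if hammingDist x y ≤ 1 then f y else 0 := Finset.sum_comm
    _ = ∑ y : Fin N → Bool, f y * ((ball y).filter P).card := by
        refine Finset.sum_congr rfl fun y _ => ?_
        rw [← Finset.sum_filter, Finset.sum_const, smul_eq_mul, mul_comm]
        congr 1
        congr 1
        ext z
        simp only [Finset.mem_filter, Finset.mem_univ, true_and, mem_ball]
        rw [hammingDist_comm]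
        tauto


variable (S : Finset (Fin N → Bool))

def cov (y : Fin N → Bool) : ℕ := ((ball y).filter fun c => c ∈ S).card

def out (y : Fin N → Bool) : ℕ := ((ball y).filter fun c => c ∉ S).card

lemma cov_add_out (y : Fin N → Bool) : cov S y + out S y = N + 1 := by
  rw [cov, out, Finset.card_filter_add_card_filter_not, card_ball]

lemma one_le_cov (hS : IsDominatingSet (hypercube N) S) (y : Fin N → Bool) :
    1 ≤ cov S y := by
  rw [cov, Nat.one_le_iff_ne_zero, ← Nat.pos_iff_ne_zero, Finset.card_pos]
  by_cases hy : y ∈ S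
  · exact ⟨y, by simp [mem_ball, hammingDist_self, hy]⟩
  · obtain ⟨u, huS, hadj⟩ := hS y hy
    have hd : hammingDist y u = 1 := hadj
    exact ⟨u, by simp [mem_ball, hd, huS]⟩

lemma cov_as_sum (y : Fin N → Bool) :
    cov S y = ∑ c ∈ S, if hammingDist y c ≤ 1 then 1 else 0 := by
  classical
  rw [cov]
  have h : (ball y).filter (fun c => c ∈ S) = S.filter (fun c => hammingDist y c ≤ 1) := by
    ext c
    simp only [Finset.mem_filter, mem_ball]
    tauto
  rw [h, ← Finset.sum_filter, Finset.sum_const, smul_eq_mul, mul_one]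

lemma even_ballsum (x : Fin N → Bool) (hx : x ∉ S) :
    Even (∑ y ∈ ball x, cov S y) := by
  classical
  have h1 : ∑ y ∈ ball x, cov S y
      = ∑ c ∈ S, ((ball x).filter fun y => hammingDist y c ≤ 1).card := by
    calc ∑ y ∈ ball x, cov S y
        = ∑ y ∈ ball x, ∑ c ∈ S, if hammingDist y c ≤ 1 then 1 else 0 := by
          exact Finset.sum_congr rfl fun y _ => cov_as_sum S y
      _ = ∑ c ∈ S, ∑ y ∈ ball x, if hammingDist y c ≤ 1 then 1 else 0 := Finset.sum_comm
      _ = ∑ c ∈ S, ((ball x).filter fun y => hammingDist y c ≤ 1).card := by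
          refine Finset.sum_congr rfl fun c _ => ?_
          rw [← Finset.sum_filter, Finset.sum_const, smul_eq_mul, mul_one]
  rw [h1]
  refine Finset.sum_induction _ Even (fun a b => Even.add) Even.zero ?_
  intro c hc
  exact even_inter x c (fun h => hx (h ▸ hc))


lemma ballsum_lower (hEvenN : 2 ∣ N)
    (hS : IsDominatingSet (hypercube N) S) (x : Fin N → Bool) (hx : x ∉ S) :
    N + 2 ≤ ∑ y ∈ ball x, cov S y := by
  have h1 : N + 1 ≤ ∑ y ∈ ball x, cov S y := by
    have := Finset.card_nsmul_le_sum (ball x) (cov S) 1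
      (fun y _ => one_le_cov S hS y)
    rwa [smul_eq_mul, mul_one, card_ball] at this
  have h2 : Even (∑ y ∈ ball x, cov S y) := even_ballsum S x hx
  obtain ⟨m, hm⟩ := h2
  omega

lemma pointwise_ineq (hN2 : 2 ≤ N) (hS : IsDominatingSet (hypercube N) S)
    (y : Fin N → Bool) :
    cov S y * out S y + (N-1) ≤ (N-1) * cov S y + out S y := by
  have h1 : 1 ≤ cov S y := one_le_cov S hS y
  have h2 : cov S y + out S y = N + 1 := cov_add_out S y
  set a := cov S y with ha
  set b := out S y with hb
  rcases Nat.lt_or_ge a 2 with hlt | hge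
  · have ha1 : a = 1 := by omega
    rw [ha1, one_mul, mul_one]
    omega
  · have hble : b ≤ N - 1 := by omega
    have hsub : a - 1 + 1 = a := by omega
    have e1 : a * b = (a-1) * b + b := by
      calc a * b = (a - 1 + 1) * b := by rw [hsub]
        _ = (a-1) * b + b := by ring
    have e2 : (N-1) * a = (a-1) * (N-1) + (N-1) := by
      calc (N-1) * a = (N-1) * (a - 1 + 1) := by rw [hsub]
        _ = (a-1) * (N-1) + (N-1) := by ring
    have e3 : (a-1) * b ≤ (a-1) * (N-1) := Nat.mul_le_mul_left _ hble
    omega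

lemma lower_bound (k : ℕ) (hk : 1 ≤ k) (hN : N = 2^k)
    (S : Finset (Fin N → Bool)) (hS : IsDominatingSet (hypercube N) S) :
    2 ^ (N - k) ≤ S.card := by
  classical
  have hN2 : 2 ≤ N := by
    rw [hN]
    calc 2 = 2^1 := by norm_num
      _ ≤ 2^k := Nat.pow_le_pow_right (by norm_num) hk
  have hEvenN : 2 ∣ N := by
    rw [hN]
    exact dvd_pow_self 2 (by omega)
  have hcardV : (Finset.univ : Finset (Fin N → Bool)).card = 2^N := by
    simp [Finset.card_univ]
  have hfS : Finset.univ.filter (fun x => x ∈ S) = S := by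
    ext z; simp
  set U := (Finset.univ.filter (fun x : Fin N → Bool => x ∉ S)).card with hU
  have hUS : S.card + U = 2^N := by
    have h := Finset.card_filter_add_card_filter_not
      (s := (Finset.univ : Finset (Fin N → Bool))) (p := fun x => x ∈ S)
    rw [hfS, hcardV] at h
    exact h
  -- sum of cov over all vertices
  have hcovsum : ∑ y : Fin N → Bool, cov S y = S.card * (N+1) := by
    have h := swap_sum (N := N) (fun x => x ∈ S) (fun _ => 1)
    rw [hfS] at h
    have hL : ∑ x ∈ S, ∑ _y ∈ ball x, (1:ℕ) = S.card * (N+1) := by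
      have : ∀ x ∈ S, ∑ _y ∈ ball x, (1:ℕ) = N + 1 := by
        intro x _
        rw [Finset.sum_const, smul_eq_mul, mul_one, card_ball]
      rw [Finset.sum_congr rfl this, Finset.sum_const, smul_eq_mul]
    rw [hL] at h
    simp only [one_mul] at h
    simp only [cov]
    exact h.symm
  have houtsum : ∑ y : Fin N → Bool, out S y = U * (N+1) := by
    have h := swap_sum (N := N) (fun x => x ∉ S) (fun _ => 1)
    have hL : ∑ x ∈ Finset.univ.filter (fun x : Fin N → Bool => x ∉ S),
        ∑ _y ∈ ball x, (1:ℕ) = U * (N+1) := by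
      have : ∀ x ∈ Finset.univ.filter (fun x : Fin N → Bool => x ∉ S),
          ∑ _y ∈ ball x, (1:ℕ) = N + 1 := by
        intro x _
        rw [Finset.sum_const, smul_eq_mul, mul_one, card_ball]
      rw [Finset.sum_congr rfl this, Finset.sum_const, smul_eq_mul, ← hU]
    rw [hL] at h
    simp only [one_mul] at h
    simp only [out]
    exact h.symm
  -- the key excess inequality
  have hQ : ∑ x ∈ Finset.univ.filter (fun x : Fin N → Bool => x ∉ S), ∑ y ∈ ball x, cov S y
      = ∑ y : Fin N → Bool, cov S y * out S y :=
    swap_sum (N := N) (fun x => x ∉ S) (cov S)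
  have hbig : U * (N+2) ≤ ∑ y : Fin N → Bool, cov S y * out S y := by
    rw [← hQ]
    have := Finset.card_nsmul_le_sum (Finset.univ.filter (fun x : Fin N → Bool => x ∉ S))
      (fun x => ∑ y ∈ ball x, cov S y) (N+2)
      (fun x hx => ballsum_lower S hEvenN hS x (by simpa using hx))
    rwa [smul_eq_mul, ← hU] at this
  have hsum2 : (∑ y : Fin N → Bool, cov S y * out S y) + 2^N * (N-1)
      ≤ (N-1) * (S.card * (N+1)) + U * (N+1) := by
    have h := Finset.sum_le_sum (fun (y : Fin N → Bool) (_ : y ∈ Finset.univ) =>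
      pointwise_ineq S hN2 hS y)
    rw [Finset.sum_add_distrib, Finset.sum_const, smul_eq_mul, hcardV] at h
    rw [Finset.sum_add_distrib, ← Finset.mul_sum, hcovsum, houtsum] at h
    exact h
  have step1 : U * (N+2) + 2^N * (N-1) ≤ (N-1) * (S.card * (N+1)) + U * (N+1) :=
    le_trans (Nat.add_le_add_right hbig _) hsum2
  have step2 : U + 2^N * (N-1) ≤ (N-1) * (S.card * (N+1)) := by
    have e : U * (N+2) = U * (N+1) + U := by ring
    rw [e] at step1
    set A := U * (N+1) with hA
    set B := 2^N * (N-1) with hB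
    set C := (N-1) * (S.card * (N+1)) with hC
    omega
  have e4 : (N-1) * (S.card * (N+1)) + S.card = N * (N * S.card) := by
    obtain ⟨M, hM⟩ : ∃ M, N = M + 1 := ⟨N-1, by omega⟩
    subst hM
    simp only [Nat.add_sub_cancel]
    ring
  have e5 : 2^N + 2^N * (N-1) = N * 2^N := by
    obtain ⟨M, hM⟩ : ∃ M, N = M + 1 := ⟨N-1, by omega⟩
    subst hM
    simp only [Nat.add_sub_cancel]
    ring
  have step3 : N * 2^N ≤ N * (N * S.card) := by
    calc N * 2^N = 2^N + 2^N * (N-1) := e5.symm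
      _ = S.card + U + 2^N * (N-1) := by rw [hUS]
      _ = S.card + (U + 2^N * (N-1)) := by ring
      _ ≤ S.card + (N-1) * (S.card * (N+1)) := Nat.add_le_add_left step2 _
      _ = (N-1) * (S.card * (N+1)) + S.card := by ring
      _ = N * (N * S.card) := e4
  have step4 : 2^N ≤ N * S.card := Nat.le_of_mul_le_mul_left step3 (by omega)
  have hkN : k ≤ N := by
    have := Nat.lt_two_pow_self (n := k)
    omega
  have final : 2^k * 2^(N-k) ≤ 2^k * S.card := by
    have h1 : 2^k * 2^(N-k) = 2^N := by rw [← pow_add]; congr 1; omega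
    have h2 : N * S.card = 2^k * S.card := congrArg (· * S.card) hN
    rw [h1, ← h2]
    exact step4
  exact Nat.le_of_mul_le_mul_left final (by positivity)



variable {k : ℕ}

def sigma (e : (Fin k → ZMod 2) ≃ Fin N) (x : Fin N → Bool) : Fin k → ZMod 2 :=
  ∑ i : Fin N, if x i then e.symm i else 0

lemma zmod2_add_self (w : Fin k → ZMod 2) : w + w = 0 := by
  funext j
  have h : ∀ a : ZMod 2, a + a = 0 := by decide
  simpa using h (w j)

lemma sigma_update (e : (Fin k → ZMod 2) ≃ Fin N) (x : Fin N → Bool) (i : Fin N) :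
    sigma e (Function.update x i (!(x i))) = sigma e x + e.symm i := by
  classical
  unfold sigma
  have split : ∀ z : Fin N → Bool,
      (∑ j : Fin N, if z j then e.symm j else 0)
        = (∑ j ∈ Finset.univ.erase i, if z j then e.symm j else 0)
            + (if z i then e.symm i else 0) :=
    fun z => (Finset.sum_erase_add _ _ (Finset.mem_univ i)).symm
  have hsame : (∑ j ∈ Finset.univ.erase i,
        if Function.update x i (!(x i)) j then e.symm j else 0)
      = ∑ j ∈ Finset.univ.erase i, if x j then e.symm j else 0 :=
    Finset.sum_congr rfl fun j hj => by
      rw [Function.update_of_ne (Finset.ne_of_mem_erase hj)]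
  rw [split, split x, hsame, Function.update_self]
  cases hxi : x i
  · simp [hxi]
  · simp only [hxi]
    norm_num
    rw [add_assoc, zmod2_add_self (e.symm i), add_zero]

lemma sigma_xor (e : (Fin k → ZMod 2) ≃ Fin N) (t x : Fin N → Bool) :
    sigma e (fun j => xor (t j) (x j)) = sigma e t + sigma e x := by
  unfold sigma
  rw [← Finset.sum_add_distrib]
  refine Finset.sum_congr rfl fun j _ => ?_
  cases ht : t j <;> cases hx : x j <;> simp [ht, hx, zmod2_add_self (e.symm j)]

lemma sigma_single (e : (Fin k → ZMod 2) ≃ Fin N) (i : Fin N) :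
    sigma e (Function.update (fun _ => false) i true) = e.symm i := by
  classical
  unfold sigma
  rw [Finset.sum_eq_single i]
  · simp
  · intro j _ hj
    simp [Function.update_of_ne hj]
  · intro h
    exact absurd (Finset.mem_univ i) h

lemma fiber_card (e : (Fin k → ZMod 2) ≃ Fin N) (w : Fin k → ZMod 2) :
    (Finset.univ.filter fun x : Fin N → Bool => sigma e x = w).card
      = (Finset.univ.filter fun x : Fin N → Bool => sigma e x = 0).card := by
  classical
  obtain ⟨t, ht⟩ : ∃ t, sigma e t = w :=
    ⟨Function.update (fun _ => false) (e w) true, by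
      rw [sigma_single]; exact e.symm_apply_apply w⟩
  have hxor2 : ∀ x : Fin N → Bool, (fun j => xor (t j) (xor (t j) (x j))) = x := by
    intro x; funext j; cases t j <;> cases x j <;> simp
  refine Finset.card_bij' (fun x _ => fun j => xor (t j) (x j))
    (fun x _ => fun j => xor (t j) (x j)) ?_ ?_ ?_ ?_
  · intro a ha
    simp only [Finset.mem_filter, Finset.mem_univ, true_and] at ha ⊢
    rw [sigma_xor, ht, ha, zmod2_add_self]
  · intro a ha
    simp only [Finset.mem_filter, Finset.mem_univ, true_and] at ha ⊢
    rw [sigma_xor, ht, ha, add_zero]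
  · intro a _
    exact hxor2 a
  · intro a _
    exact hxor2 a

lemma exists_dominating (k N : ℕ) (hk : 1 ≤ k) (hN : N = 2^k) :
    ∃ S : Finset (Fin N → Bool),
      IsDominatingSet (hypercube N) S ∧ S.card = 2^(N-k) := by
  classical
  have hcW : Fintype.card (Fin k → ZMod 2) = Fintype.card (Fin N) := by
    rw [hN]
    simp [ZMod.card]
  obtain ⟨e⟩ : Nonempty ((Fin k → ZMod 2) ≃ Fin N) := ⟨Fintype.equivOfCardEq hcW⟩
  refine ⟨Finset.univ.filter (fun x => sigma e x = 0), ?_, ?_⟩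
  · intro v hv
    have hσ : sigma e v ≠ 0 := by simpa using hv
    refine ⟨Function.update v (e (sigma e v)) (!(v (e (sigma e v)))), ?_, ?_⟩
    · simp only [Finset.mem_filter, Finset.mem_univ, true_and]
      rw [sigma_update, e.symm_apply_apply, zmod2_add_self]
    · show hammingDist v (Function.update v (e (sigma e v)) (!(v (e (sigma e v))))) = 1
      exact hammingDist_flip v _
  · have hfib := Finset.card_eq_sum_card_fiberwise
      (s := (Finset.univ : Finset (Fin N → Bool)))
      (t := (Finset.univ : Finset (Fin k → ZMod 2)))
      (f := sigma e) (fun x _ => Finset.mem_univ _)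
    have hV : (Finset.univ : Finset (Fin N → Bool)).card = 2^N := by
      simp [Finset.card_univ]
    have hsum : ∑ w : Fin k → ZMod 2,
        (Finset.univ.filter fun x : Fin N → Bool => sigma e x = w).card
          = 2^k * (Finset.univ.filter fun x : Fin N → Bool => sigma e x = 0).card := by
      rw [Finset.sum_congr rfl (fun w _ => fiber_card e w), Finset.sum_const, smul_eq_mul,
        Finset.card_univ]
      congr 1
      simp [ZMod.card]
    have key : 2^k * (Finset.univ.filter fun x : Fin N → Bool => sigma e x = 0).card = 2^N := by
      rw [← hsum, ← hfib, hV]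
    have hkN : k ≤ N := by
      have := Nat.lt_two_pow_self (n := k)
      omega
    have h2 : (2:ℕ)^N = 2^k * 2^(N-k) := by
      rw [← pow_add]; congr 1; omega
    rw [h2] at key
    exact Nat.eq_of_mul_eq_mul_left (by positivity) key


end VanWee

/-- For every `k ≥ 1`, `γ(Q_{2^k}) = 2^(2^k - k)`. -/
theorem domination_hypercube_pow (k : ℕ) (hk : 1 ≤ k) :
    dominationNumber (hypercube (2 ^ k)) = 2 ^ (2 ^ k - k) := by
  obtain ⟨S₀, hdom₀, hcard₀⟩ := VanWee.exists_dominating k (2^k) hk rfl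
  have hmem : 2^(2^k - k) ∈ {n : ℕ | ∃ S : Finset (Fin (2^k) → Bool),
      IsDominatingSet (hypercube (2^k)) S ∧ S.card = n} := ⟨S₀, hdom₀, hcard₀⟩
  apply le_antisymm
  · exact Nat.sInf_le hmem
  · refine le_csInf ⟨_, hmem⟩ ?_
    rintro m ⟨S, hS, rfl⟩
    exact VanWee.lower_bound k hk rfl S hS
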